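/- arXiv:2210.07195 — 2 statements merged into one kernel-verified Lean document; each statement's English description precedes it below -/
import Mathlib

section
/- Let $n \geq 1$, let $b \in GL_n(\mathbb{C})$ be an invertible upper triangular matrix, and let $\xi \in M_n(\mathbb{C})$ be upper triangular. Then $\operatorname{tr}((\xi + b\xi b^{-1})x) = 0$ for every upper triangular matrix $x \in M_n(\mathbb{C})$ if and only if $\xi$ is strictly upper triangular. (This is Lemma 1.1 of the paper --- for $\xi$ in the Borel subalgebra $\mathfrak{b}$, the tangent space $T_B$ lies in $\ker \sigma(\xi)$ if and only if $\xi \in \mathfrak{u}$ --- made explicit at a point $b$ of the Borel subgroup of $G = GL_n(\mathbb{C})$ with the trace form as invariant bilinear form.) -/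
open Matrix

private lemma tri_diag_mul {n : ℕ} (A B : Matrix (Fin n) (Fin n) ℂ)
    (hA : ∀ i j : Fin n, j < i → A i j = 0) (hB : ∀ i j : Fin n, j < i → B i j = 0)
    (i : Fin n) : (A * B) i i = A i i * B i i := by
  rw [Matrix.mul_apply]
  apply Finset.sum_eq_single i
  · intro j _ hj
    rcases lt_or_gt_of_ne hj with h | h
    · rw [hA i j h, zero_mul]
    · rw [hB j i h, mul_zero]
  · simp

/-- Lemma 1.1 of the paper for `G = GL_n(ℂ)`: for `b` in the Borel subgroup `B` of
invertible upper triangular matrices and `ξ` in the Borel subalgebra `𝔟` of upper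
triangular matrices, the tangent space `T_B` lies in `ker σ(ξ)` — i.e.
`tr((ξ + b ξ b⁻¹) x) = 0` for every upper triangular `x` — if and only if `ξ` lies
in the nilradical `𝔲` of strictly upper triangular matrices. -/
theorem stmt_1 (n : ℕ) (hn : 1 ≤ n) (b : Matrix (Fin n) (Fin n) ℂ)
    (hb : IsUnit b.det) (hbu : ∀ i j : Fin n, j < i → b i j = 0)
    (ξ : Matrix (Fin n) (Fin n) ℂ) (hξ : ∀ i j : Fin n, j < i → ξ i j = 0) :
    (∀ x : Matrix (Fin n) (Fin n) ℂ, (∀ i j : Fin n, j < i → x i j = 0) →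
      ((ξ + b * ξ * b⁻¹) * x).trace = 0) ↔
    (∀ i j : Fin n, j ≤ i → ξ i j = 0) := by
  haveI := b.invertibleOfIsUnitDet hb
  have hbinv : ∀ i j : Fin n, j < i → b⁻¹ i j = 0 := by
    have := Matrix.blockTriangular_inv_of_blockTriangular (M := b) (b := id) hbu
    exact fun i j h => this h
  have hdiag : ∀ i : Fin n, b i i * b⁻¹ i i = 1 := by
    intro i
    have := tri_diag_mul b b⁻¹ hbu hbinv i
    rw [Matrix.mul_nonsing_inv b hb] at this
    simpa using this.symm
  have hbξ : ∀ i j : Fin n, j < i → (b * ξ) i j = 0 := by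
    have := Matrix.BlockTriangular.mul (b := id) (M := b) (N := ξ) hbu hξ
    exact fun i j h => this h
  have hconj : ∀ i j : Fin n, j < i → (b * ξ * b⁻¹) i j = 0 := by
    have := Matrix.BlockTriangular.mul (b := id) (M := b * ξ) (N := b⁻¹) hbξ hbinv
    exact fun i j h => this h
  have hconjdiag : ∀ i : Fin n, (b * ξ * b⁻¹) i i = ξ i i := by
    intro i
    rw [tri_diag_mul (b * ξ) b⁻¹ hbξ hbinv i, tri_diag_mul b ξ hbu hξ i]
    have := hdiag i
    calc b i i * ξ i i * b⁻¹ i i = ξ i i * (b i i * b⁻¹ i i) := by ring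
    _ = ξ i i := by rw [this, mul_one]
  have hη : ∀ i j : Fin n, j < i → (ξ + b * ξ * b⁻¹) i j = 0 := by
    intro i j hji
    simp [Matrix.add_apply, hξ i j hji, hconj i j hji]
  have key : ∀ x : Matrix (Fin n) (Fin n) ℂ, (∀ i j : Fin n, j < i → x i j = 0) →
      ((ξ + b * ξ * b⁻¹) * x).trace = ∑ i, (2 * ξ i i) * x i i := by
    intro x hx
    rw [Matrix.trace]
    apply Finset.sum_congr rfl
    intro i _
    rw [Matrix.diag_apply, tri_diag_mul _ _ hη hx i]
    simp only [Matrix.add_apply, hconjdiag i]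
    ring
  constructor
  · intro h i j hji
    rcases lt_or_eq_of_le hji with h' | h'
    · exact hξ i j h'
    subst h'
    have hx : ∀ a c : Fin n, c < a → Matrix.single j j (1 : ℂ) a c = 0 := by
      intro a c hac
      apply Matrix.single_apply_of_ne
      rintro ⟨rfl, rfl⟩; exact lt_irrefl _ hac
    have hh := h (Matrix.single j j 1) hx
    rw [key _ hx] at hh
    rw [Finset.sum_eq_single j (fun c _ hc => by
      rw [Matrix.single_apply_of_ne _ _ _ _ _ (by tauto), mul_zero]) (by simp)] at hh
    simp only [Matrix.single_apply_same, mul_one] at hh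
    have h2 : (2 : ℂ) ≠ 0 := two_ne_zero
    exact (mul_eq_zero.mp hh).resolve_left h2
  · intro h x hx
    rw [key x hx]
    apply Finset.sum_eq_zero
    intro i _
    rw [h i i le_rfl]
    ring
end

section
/- Let $V$ and $W$ be finite-dimensional vector spaces over a field $K$, let $f : V \to W$ be a linear map, and let $L \subseteq W \times W^*$ be a Lagrangian subspace with respect to the canonical pairing. Then the pullback $f^*L = \{(X, f^*\alpha) \in V \times V^* \mid (f(X), \alpha) \in L\}$ is a Lagrangian subspace of $V \times V^*$ with respect to the canonical pairing. (This is the fiberwise linear-algebra content of the fact that the pullback of a Dirac structure, when smooth, is again a Dirac structure.) -/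
/-- The canonical symmetric pairing `⟨(X, α), (Y, β)⟩ = α(Y) + β(X)` on `V × V*`. -/
noncomputable def canPairing (K V : Type*) [Field K] [AddCommGroup V] [Module K V] :
    LinearMap.BilinForm K (V × Module.Dual K V) :=
  LinearMap.mk₂ K (fun p q => p.2 q.1 + q.2 p.1)
    (fun p p' q => by simp; ring)
    (fun c p q => by simp; ring)
    (fun p q q' => by simp; ring)
    (fun c p q => by simp; ring)

/-- The pullback `f^*L = {(X, f^*α) | (f(X), α) ∈ L} ⊆ V × V*` of a subspace
`L ⊆ W × W*` along a linear map `f : V → W`. -/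
noncomputable def diracPullback {K V W : Type*} [Field K] [AddCommGroup V] [Module K V]
    [AddCommGroup W] [Module K W] (f : V →ₗ[K] W)
    (L : Submodule K (W × Module.Dual K W)) : Submodule K (V × Module.Dual K V) :=
  Submodule.map (LinearMap.prodMap (LinearMap.id : V →ₗ[K] V) f.dualMap)
    (Submodule.comap (LinearMap.prodMap f (LinearMap.id : Module.Dual K W →ₗ[K] Module.Dual K W)) L)

set_option maxHeartbeats 1000000 in
/-- The pullback of a Lagrangian subspace `L ⊆ W × W*` along a linear map
`f : V → W` is a Lagrangian subspace of `V × V*`: the fiberwise content of the fact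
that the pullback of a Dirac structure is again a Dirac structure. -/
theorem stmt_11 (K V W : Type*) [Field K] [AddCommGroup V] [Module K V]
    [FiniteDimensional K V] [AddCommGroup W] [Module K W] [FiniteDimensional K W]
    (f : V →ₗ[K] W) (L : Submodule K (W × Module.Dual K W))
    (hL : L = (canPairing K W).orthogonal L) :
    diracPullback f L = (canPairing K V).orthogonal (diracPullback f L) := by
  apply le_antisymm
  · -- isotropic
    intro p hp
    rw [LinearMap.BilinForm.mem_orthogonal_iff]
    intro q hq
    obtain ⟨⟨y, γ⟩, hyg, rfl⟩ := hq
    obtain ⟨⟨x, α⟩, hxa, rfl⟩ := hp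
    simp only [SetLike.mem_coe, Submodule.mem_comap, LinearMap.prodMap_apply, LinearMap.id_apply] at hxa hyg
    have h1 : (f x, α) ∈ (canPairing K W).orthogonal L := hL ▸ hxa
    have h2 := h1 (f y, γ) hyg
    simpa [canPairing, LinearMap.BilinForm.IsOrtho, add_comm] using h2
  · -- coisotropic
    rintro ⟨Y, β⟩ hp
    rw [LinearMap.BilinForm.mem_orthogonal_iff] at hp
    set g : (V × L) →ₗ[K] W :=
      f ∘ₗ LinearMap.fst K V L +
        (LinearMap.fst K W (Module.Dual K W)) ∘ₗ L.subtype ∘ₗ LinearMap.snd K V L with hg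
    set h : (V × L) →ₗ[K] K :=
      β ∘ₗ LinearMap.fst K V L -
        (LinearMap.applyₗ (f Y)) ∘ₗ (LinearMap.snd K W (Module.Dual K W)) ∘ₗ L.subtype ∘ₗ
          LinearMap.snd K V L with hh
    have hgapp : ∀ (x : V) (z : L), g (x, z) = f x + (z : W × Module.Dual K W).1 := by
      intro x z; simp [hg]
    have hhapp : ∀ (x : V) (z : L),
        h (x, z) = β x - (z : W × Module.Dual K W).2 (f Y) := by
      intro x z; simp [hh]
    have hker : LinearMap.ker g ≤ LinearMap.ker h := by
      rintro ⟨x, z⟩ hx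
      have hxg : f x + (z : W × Module.Dual K W).1 = 0 := by
        rw [LinearMap.mem_ker, hgapp] at hx; exact hx
      have hz : ((z : W × Module.Dual K W).1, (z : W × Module.Dual K W).2) ∈ L := z.2
      have hmem : (-x, f.dualMap (z : W × Module.Dual K W).2) ∈ diracPullback f L := by
        refine ⟨(-x, (z : W × Module.Dual K W).2), ?_, by simp⟩
        simp only [SetLike.mem_coe, Submodule.mem_comap, LinearMap.prodMap_apply,
          LinearMap.id_apply, map_neg]
        have : -f x = (z : W × Module.Dual K W).1 := by
          rw [neg_eq_iff_add_eq_zero]; exact hxg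
        rw [this]; exact hz
      have h0 := hp _ hmem
      simp only [canPairing, LinearMap.BilinForm.IsOrtho, LinearMap.mk₂_apply] at h0
      have h0' : (z : W × Module.Dual K W).2 (f Y) + -β x = 0 := by
        simpa [LinearMap.dualMap_apply, map_neg] using h0
      have : h (x, z) = 0 := by rw [hhapp]; linear_combination -h0'
      exact this
    -- build α : W* extending the functional induced by h on range g
    obtain ⟨sec, hsec⟩ :=
      g.rangeRestrict.exists_rightInverse_of_surjective (LinearMap.range_rangeRestrict g)
    obtain ⟨α, hα⟩ := LinearMap.exists_extend (h ∘ₗ sec)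
    have hαg : ∀ p : V × L, α (g p) = h p := by
      intro p
      set q : LinearMap.range g := ⟨g p, LinearMap.mem_range_self g p⟩ with hq
      have h1 : α (g p) = (α ∘ₗ (LinearMap.range g).subtype) q := rfl
      rw [h1, hα, LinearMap.comp_apply]
      have h2 : g (sec q) = g p := by
        have := congrArg (fun m => ((m : (LinearMap.range g) →ₗ[K] LinearMap.range g) q : W)) hsec
        simpa [LinearMap.rangeRestrict] using this
      have h3 : sec q - p ∈ LinearMap.ker h := by
        apply hker
        rw [LinearMap.mem_ker]
        have hms := g.map_sub (sec q) p
        rw [hms, h2, sub_self]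
      have h4 : h (sec q) - h p = 0 := by
        rw [← map_sub]; exact h3
      linear_combination h4
    have hβ : f.dualMap α = β := by
      ext x
      have := hαg (x, 0)
      rw [hgapp, hhapp] at this
      simpa using this
    have hfYα : (f Y, α) ∈ L := by
      rw [hL]
      intro m hm
      have := hαg (0, ⟨m, hm⟩)
      simp only [hgapp, hhapp, map_zero, zero_add, zero_sub] at this
      simp only [canPairing, LinearMap.BilinForm.IsOrtho, LinearMap.mk₂_apply]
      linear_combination this
    exact ⟨(Y, α), by
      simpa only [SetLike.mem_coe, Submodule.mem_comap, LinearMap.prodMap_apply, LinearMap.id_apply] using hfYα,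
      by simp [hβ]⟩
end
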